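/- Let d, r ≥ 1, m = d·r, and let σ be the m-cycle (1 2 ⋯ m) in S_m. Let q be the partition of {1,…,m} into orbits of ⟨σ^r⟩ (each of size d). For 1 ≤ r' ≤ r, the number of partitions p of {1,…,m} into d·r' blocks that are transverse to q (no block of p contains two elements equivalent under q), refine-compatible as in the paper (p is coarser than the singleton refinement compatible with q and is fixed by σ^r) equals S(r, r') · d^{r - r'}, where S(r,r') is the Stirling number of the second kind. -/

import Mathlib

/-- `P` is a partition of `Fin i` into `j` nonempty blocks. -/
def IsPartitionInto (i j : ℕ) (P : Finset (Finset (Fin i))) : Prop :=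
  (∀ B ∈ P, B.Nonempty) ∧ (∀ x : Fin i, ∃ B ∈ P, x ∈ B) ∧
    (∀ B ∈ P, ∀ B' ∈ P, B ≠ B' → Disjoint B B') ∧ P.card = j

/-- Stirling number of the second kind. -/
noncomputable def stirling2 (i j : ℕ) : ℕ :=
  Nat.card {P : Finset (Finset (Fin i)) // IsPartitionInto i j P}

/-- `P` is a partition of `Fin m` into nonempty blocks. -/
def IsPartition {m : ℕ} (P : Finset (Finset (Fin m))) : Prop :=
  (∀ B ∈ P, B.Nonempty) ∧ (∀ x : Fin m, ∃ B ∈ P, x ∈ B) ∧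
    (∀ B ∈ P, ∀ B' ∈ P, B ≠ B' → Disjoint B B')

/-- The natural action of a permutation on set partitions (blockwise image). -/
def permAct {m : ℕ} (σ : Equiv.Perm (Fin m)) (P : Finset (Finset (Fin m))) :
    Finset (Finset (Fin m)) :=
  P.image fun B => B.image fun x => σ x

/-- The orbit of `x` under the cyclic subgroup generated by `τ`. -/
def orbitBlock {m : ℕ} (τ : Equiv.Perm (Fin m)) (x : Fin m) : Finset (Fin m) :=
  (Finset.range m).image fun k => (τ ^ k) x

/-- The partition of `Fin m` into orbits of the subgroup generated by `τ`. -/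
def orbitPartition {m : ℕ} (τ : Equiv.Perm (Fin m)) : Finset (Finset (Fin m)) :=
  Finset.univ.image (orbitBlock τ)

set_option linter.unusedSectionVars false
namespace TFP
open Fin.NatCast

variable {d r : ℕ}

def embf (d r : ℕ) (i : Fin r) (c : Fin d) : Fin (d * r) :=
  ⟨i.1 + r * c.1, by
    calc i.1 + r * c.1 < r + r * c.1 := by omega
    _ = r * (c.1 + 1) := by ring
    _ ≤ r * d := Nat.mul_le_mul_left _ c.2
    _ = d * r := Nat.mul_comm _ _⟩

lemma rpos (x : Fin (d * r)) : 0 < r := by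
  have h0 : 0 < d * r := x.pos
  rcases Nat.eq_zero_or_pos r with h | h
  · rw [h, Nat.mul_zero] at h0; omega
  · exact h

lemma embf_inj {i i' : Fin r} {c c' : Fin d} (h : embf d r i c = embf d r i' c') :
    i = i' ∧ c = c' := by
  have hv : i.1 + r * c.1 = i'.1 + r * c'.1 := congrArg Fin.val h
  have e1 : (i.1 + r * c.1) % r = i.1 := by
    rw [Nat.add_mul_mod_self_left, Nat.mod_eq_of_lt i.2]
  have e2 : (i'.1 + r * c'.1) % r = i'.1 := by
    rw [Nat.add_mul_mod_self_left, Nat.mod_eq_of_lt i'.2]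
  have hi : i.1 = i'.1 := by rw [← e1, ← e2, hv]
  have hr0 : 0 < r := Nat.lt_of_le_of_lt (Nat.zero_le _) i.2
  have hc : c.1 = c'.1 := Nat.eq_of_mul_eq_mul_left hr0 (by omega)
  exact ⟨Fin.ext hi, Fin.ext hc⟩

lemma embf_surj (x : Fin (d * r)) : ∃ i c, embf d r i c = x := by
  have hr0 : 0 < r := rpos x
  have hd0 : x.1 / r < d := by
    rw [Nat.div_lt_iff_lt_mul hr0]; exact x.2
  refine ⟨⟨x.1 % r, Nat.mod_lt _ hr0⟩, ⟨x.1 / r, hd0⟩, ?_⟩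
  apply Fin.ext
  simp only [embf]
  exact Nat.mod_add_div _ _

lemma finRotate_pow_apply {m : ℕ} [NeZero m] (k : ℕ) (x : Fin m) :
    ((finRotate m) ^ k) x = x + (k : Fin m) := by
  cases m with
  | zero => exact absurd rfl (NeZero.ne 0)
  | succ n =>
    induction k with
    | zero => simp
    | succ k ih =>
      rw [pow_succ', Equiv.Perm.mul_apply, ih, finRotate_succ_apply, Nat.cast_add,
        Nat.cast_one, add_assoc]

lemma rho_embf [NeZero d] (i : Fin r) (c : Fin d) :
    ((finRotate (d * r)) ^ r) (embf d r i c) = embf d r i (c + 1) := by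
  have hr0 : 0 < r := i.pos
  have hd0 : 0 < d := Nat.pos_of_ne_zero (NeZero.ne d)
  haveI : NeZero (d * r) := ⟨by positivity⟩
  rw [finRotate_pow_apply]
  apply Fin.ext
  rw [Fin.add_def]
  have hval : ((r : Fin (d * r))).1 = r % (d * r) := Fin.val_natCast _ _
  rw [hval]
  show ((i.1 + r * c.1) + r % (d * r)) % (d * r) = i.1 + r * ((c + 1 : Fin d)).1
  have hcval : ((c + 1 : Fin d)).1 = (c.1 + 1 % d) % d := by
    rw [Fin.add_def, Fin.val_one']
  rw [hcval]
  rcases eq_or_lt_of_le (Nat.succ_le_of_lt hd0 : 1 ≤ d) with hd1 | hd2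
  · have hd1' : d = 1 := hd1.symm
    subst hd1'
    have hc0 : c.1 = 0 := by omega
    rw [Nat.one_mul, hc0]
    simp [Nat.mod_self]
    exact Nat.mod_eq_of_lt i.2
  · have hrm : r % (d * r) = r := by
      apply Nat.mod_eq_of_lt
      calc r = 1 * r := (Nat.one_mul r).symm
      _ < d * r := (Nat.mul_lt_mul_right hr0).mpr (by omega)
    rw [hrm, Nat.mod_eq_of_lt (show (1:ℕ) < d by omega)]
    have h4 : r * (d - 1) + r = r * d := by
      rw [← Nat.mul_succ]; congr 1; omega
    have h5 : r * d = d * r := Nat.mul_comm _ _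
    rcases Nat.lt_or_ge (c.1 + 1) d with hlt | hge
    · rw [Nat.mod_eq_of_lt hlt]
      have heq : i.1 + r * c.1 + r = i.1 + r * (c.1 + 1) := by ring
      have h3 : r * (c.1 + 1) ≤ r * (d - 1) := Nat.mul_le_mul_left _ (by omega)
      rw [heq, Nat.mod_eq_of_lt (by have := i.2; omega)]
    · have hcd : c.1 + 1 = d := by have := c.2; omega
      rw [hcd, Nat.mod_self, Nat.mul_zero, Nat.add_zero]
      have h3 : r * c.1 = r * (d - 1) := by rw [show c.1 = d - 1 by omega]
      have heq : i.1 + r * c.1 + r = i.1 + d * r := by omega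
      rw [heq, Nat.add_mod_right, Nat.mod_eq_of_lt (by have := i.2; omega)]

section WithNeZero
variable [NeZero d]

/-- abbreviation for the relevant permutation -/
local notation "ρ" => (finRotate (d * r)) ^ r

lemma rho_pow_embf (k : ℕ) (i : Fin r) (c : Fin d) :
    ((ρ) ^ k) (embf d r i c) = embf d r i (c + (k : Fin d)) := by
  induction k with
  | zero => simp
  | succ k ih =>
    rw [pow_succ', Equiv.Perm.mul_apply, ih, rho_embf, Nat.cast_add, Nat.cast_one,
      add_assoc]

lemma permAct_fixed_iff {m : ℕ} (σ : Equiv.Perm (Fin m)) (p : Finset (Finset (Fin m))) :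
    permAct σ p = p ↔ ∀ B ∈ p, B.image (fun x => σ x) ∈ p := by
  constructor
  · intro h B hB
    rw [← h]
    exact Finset.mem_image_of_mem _ hB
  · intro h
    apply Finset.eq_of_subset_of_card_le
    · intro X hX
      rw [permAct, Finset.mem_image] at hX
      obtain ⟨B, hB, rfl⟩ := hX
      exact h B hB
    · rw [permAct, Finset.card_image_of_injective _ (Finset.image_injective σ.injective)]

lemma image_pow_mem {m : ℕ} {σ : Equiv.Perm (Fin m)} {p : Finset (Finset (Fin m))}
    (h : permAct σ p = p) (k : ℕ) {B : Finset (Fin m)} (hB : B ∈ p) :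
    B.image (fun x => (σ ^ k) x) ∈ p := by
  induction k with
  | zero => simpa using hB
  | succ k ih =>
    have : B.image (fun x => (σ ^ (k+1)) x)
        = (B.image (fun x => (σ ^ k) x)).image (fun x => σ x) := by
      rw [Finset.image_image]
      apply Finset.image_congr
      intro x _
      simp [pow_succ', Equiv.Perm.mul_apply]
    rw [this]
    exact (permAct_fixed_iff σ p).1 h _ ih

def blockOf (φ : Fin r → Fin d) (b : Finset (Fin r)) (c : Fin d) : Finset (Fin (d * r)) :=
  b.image fun i => embf d r i (φ i + c)

lemma mem_blockOf {φ : Fin r → Fin d} {b : Finset (Fin r)} {c : Fin d} {i : Fin r}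
    {k : Fin d} : embf d r i k ∈ blockOf φ b c ↔ i ∈ b ∧ k = φ i + c := by
  rw [blockOf, Finset.mem_image]
  constructor
  · rintro ⟨j, hj, hje⟩
    obtain ⟨rfl, rfl⟩ := embf_inj hje
    exact ⟨hj, rfl⟩
  · rintro ⟨hi, rfl⟩
    exact ⟨i, hi, rfl⟩

lemma image_rho_blockOf (φ : Fin r → Fin d) (b : Finset (Fin r)) (c : Fin d) :
    (blockOf φ b c).image (fun x => (ρ) x) = blockOf φ b (c + 1) := by
  rw [blockOf, blockOf, Finset.image_image]
  apply Finset.image_congr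
  intro i _
  show (ρ) (embf d r i (φ i + c)) = embf d r i (φ i + (c + 1))
  rw [rho_embf, add_assoc]

lemma orbitBlock_embf (hr : 0 < r) (i : Fin r) (c : Fin d) :
    orbitBlock (ρ) (embf d r i c)
      = (Finset.univ : Finset (Fin d)).image (fun c' => embf d r i c') := by
  have hd0 : 0 < d := Nat.pos_of_ne_zero (NeZero.ne d)
  have hdm : d ≤ d * r := Nat.le_mul_of_pos_right d hr
  ext x
  rw [orbitBlock, Finset.mem_image, Finset.mem_image]
  constructor
  · rintro ⟨k, _, rfl⟩
    exact ⟨c + (k : Fin d), Finset.mem_univ _, (rho_pow_embf k i c).symm⟩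
  · rintro ⟨c', _, rfl⟩
    refine ⟨(c' - c).1, Finset.mem_range.2 (lt_of_lt_of_le (c' - c).2 hdm), ?_⟩
    rw [rho_pow_embf, Fin.cast_val_eq_self]
    congr 1
    rw [add_comm, sub_add_cancel]

lemma transverse_iff (hr : 0 < r) (p : Finset (Finset (Fin (d * r)))) :
    (∀ B ∈ p, ∀ C ∈ orbitPartition (ρ), (B ∩ C).card ≤ 1)
      ↔ ∀ B ∈ p, ∀ (i : Fin r) (c c' : Fin d),
          embf d r i c ∈ B → embf d r i c' ∈ B → c = c' := by
  constructor
  · intro h B hB i c c' hc hc'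
    have hC : orbitBlock (ρ) (embf d r i c) ∈ orbitPartition (ρ) :=
      Finset.mem_image_of_mem _ (Finset.mem_univ _)
    have h1 := h B hB _ hC
    rw [orbitBlock_embf hr] at h1
    have m1 : embf d r i c ∈ B ∩ Finset.univ.image (fun c' => embf d r i c') :=
      Finset.mem_inter.2 ⟨hc, Finset.mem_image_of_mem _ (Finset.mem_univ _)⟩
    have m2 : embf d r i c' ∈ B ∩ Finset.univ.image (fun c' => embf d r i c') :=
      Finset.mem_inter.2 ⟨hc', Finset.mem_image_of_mem _ (Finset.mem_univ _)⟩
    have := Finset.card_le_one.1 h1 _ m1 _ m2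
    exact (embf_inj this).2
  · intro h B hB C hC
    rw [orbitPartition, Finset.mem_image] at hC
    obtain ⟨x, _, rfl⟩ := hC
    obtain ⟨j, k, rfl⟩ := embf_surj x
    rw [orbitBlock_embf hr]
    rw [Finset.card_le_one]
    intro a ha b hb
    rw [Finset.mem_inter, Finset.mem_image] at ha hb
    obtain ⟨haB, ca, _, rfl⟩ := ha
    obtain ⟨hbB, cb, _, rfl⟩ := hb
    rw [h B hB j ca cb haB hbB]


def resf (x : Fin (d * r)) : Fin r := ⟨x.1 % r, Nat.mod_lt _ (rpos x)⟩

lemma resf_embf (i : Fin r) (c : Fin d) : resf (embf d r i c) = i := by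
  apply Fin.ext
  show (i.1 + r * c.1) % r = i.1
  rw [Nat.add_mul_mod_self_left, Nat.mod_eq_of_lt i.2]

lemma mem_res {B : Finset (Fin (d * r))} {i : Fin r} :
    i ∈ B.image resf ↔ ∃ c, embf d r i c ∈ B := by
  rw [Finset.mem_image]
  constructor
  · rintro ⟨x, hx, rfl⟩
    obtain ⟨j, k, rfl⟩ := embf_surj x
    exact ⟨k, by rwa [resf_embf]⟩
  · rintro ⟨c, hc⟩
    exact ⟨_, hc, resf_embf i c⟩

def back (P : Finset (Finset (Fin r))) (φ : Fin r → Fin d) :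
    Finset (Finset (Fin (d * r))) :=
  (P ×ˢ (Finset.univ : Finset (Fin d))).image fun bc => blockOf φ bc.1 bc.2

lemma mem_back {P : Finset (Finset (Fin r))} {φ : Fin r → Fin d}
    {X : Finset (Fin (d * r))} :
    X ∈ back P φ ↔ ∃ b ∈ P, ∃ c, blockOf φ b c = X := by
  rw [back, Finset.mem_image]
  constructor
  · rintro ⟨⟨b, c⟩, hbc, rfl⟩
    exact ⟨b, (Finset.mem_product.1 hbc).1, c, rfl⟩
  · rintro ⟨b, hb, c, rfl⟩
    exact ⟨⟨b, c⟩, Finset.mem_product.2 ⟨hb, Finset.mem_univ _⟩, rfl⟩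

lemma blocks_eq_of_mem {α : Type*} {P : Finset (Finset α)}
    (hP3 : ∀ B ∈ P, ∀ B' ∈ P, B ≠ B' → Disjoint B B')
    {b b' : Finset α} (hb : b ∈ P) (hb' : b' ∈ P) {i : α} (hi : i ∈ b)
    (hi' : i ∈ b') : b = b' := by
  by_contra h
  exact (Finset.disjoint_left.1 (hP3 b hb b' hb' h)) hi hi'

section BackProps
variable {P : Finset (Finset (Fin r))} {φ : Fin r → Fin d}
  (hP1 : ∀ b ∈ P, b.Nonempty)
  (hP2 : ∀ i : Fin r, ∃ b ∈ P, i ∈ b)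
  (hP3 : ∀ b ∈ P, ∀ b' ∈ P, b ≠ b' → Disjoint b b')

include hP1 hP3 in
lemma blockOf_inj {b b' : Finset (Fin r)} {c c' : Fin d} (hb : b ∈ P) (hb' : b' ∈ P)
    (h : blockOf φ b c = blockOf φ b' c') : b = b' ∧ c = c' := by
  obtain ⟨i, hi⟩ := hP1 b hb
  have h1 : embf d r i (φ i + c) ∈ blockOf φ b' c' := by
    rw [← h]; exact mem_blockOf.2 ⟨hi, rfl⟩
  obtain ⟨hi', he⟩ := mem_blockOf.1 h1
  exact ⟨blocks_eq_of_mem hP3 hb hb' hi hi', add_left_cancel he⟩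

include hP1 hP3 in
lemma back_card : (back P φ).card = P.card * d := by
  rw [back, Finset.card_image_of_injOn, Finset.card_product, Finset.card_univ,
    Fintype.card_fin]
  rintro ⟨b, c⟩ hbc ⟨b', c'⟩ hbc' h
  obtain ⟨h1, h2⟩ := blockOf_inj hP1 hP3 (Finset.mem_product.1 (Finset.mem_coe.1 hbc)).1
    (Finset.mem_product.1 (Finset.mem_coe.1 hbc')).1 h
  exact Prod.ext h1 h2

include hP1 hP2 hP3 in
lemma back_isPartition : IsPartition (back P φ) := by
  refine ⟨?_, ?_, ?_⟩
  · intro X hX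
    obtain ⟨b, hb, c, rfl⟩ := mem_back.1 hX
    exact (hP1 b hb).image _
  · intro x
    obtain ⟨i, k, rfl⟩ := embf_surj x
    obtain ⟨b, hb, hib⟩ := hP2 i
    refine ⟨blockOf φ b (k - φ i), mem_back.2 ⟨b, hb, _, rfl⟩, ?_⟩
    refine mem_blockOf.2 ⟨hib, ?_⟩
    rw [add_comm, sub_add_cancel]
  · intro X hX Y hY hXY
    obtain ⟨b, hb, c, rfl⟩ := mem_back.1 hX
    obtain ⟨b', hb', c', rfl⟩ := mem_back.1 hY
    rw [Finset.disjoint_left]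
    intro a ha ha'
    obtain ⟨i, k, rfl⟩ := embf_surj a
    obtain ⟨hi, he⟩ := mem_blockOf.1 ha
    obtain ⟨hi', he'⟩ := mem_blockOf.1 ha'
    apply hXY
    have hbb' : b = b' := blocks_eq_of_mem hP3 hb hb' hi hi'
    have hcc' : c = c' := add_left_cancel (he ▸ he')
    rw [hbb', hcc']

lemma back_fixed : permAct (ρ) (back P φ) = back P φ := by
  rw [permAct, back, Finset.image_image]
  have hcongr : ∀ bc ∈ P ×ˢ (Finset.univ : Finset (Fin d)),
      ((fun B => Finset.image (fun x => (ρ) x) B) ∘ fun bc => blockOf φ bc.1 bc.2) bc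
        = blockOf φ bc.1 (bc.2 + 1) := by
    intro bc _
    exact image_rho_blockOf φ bc.1 bc.2
  rw [Finset.image_congr hcongr]
  ext X
  simp only [Finset.mem_image, Finset.mem_product]
  constructor
  · rintro ⟨⟨b, c⟩, ⟨hb, -⟩, rfl⟩
    exact ⟨⟨b, c + 1⟩, ⟨hb, Finset.mem_univ _⟩, rfl⟩
  · rintro ⟨⟨b, c⟩, ⟨hb, -⟩, rfl⟩
    exact ⟨⟨b, c - 1⟩, ⟨hb, Finset.mem_univ _⟩, by rw [sub_add_cancel]⟩

lemma back_transverse : ∀ B ∈ back P φ, ∀ (i : Fin r) (c c' : Fin d),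
    embf d r i c ∈ B → embf d r i c' ∈ B → c = c' := by
  intro B hB i c c' hc hc'
  obtain ⟨b, hb, cc, rfl⟩ := mem_back.1 hB
  obtain ⟨_, he⟩ := mem_blockOf.1 hc
  obtain ⟨_, he'⟩ := mem_blockOf.1 hc'
  rw [he, he']

end BackProps

lemma image_fst_product (P : Finset (Finset (Fin r))) :
    (P ×ˢ (Finset.univ : Finset (Fin d))).image Prod.fst = P := by
  ext b
  rw [Finset.mem_image]
  constructor
  · rintro ⟨bc, hbc, rfl⟩
    exact (Finset.mem_product.1 hbc).1
  · intro hb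
    exact ⟨⟨b, 0⟩, Finset.mem_product.2 ⟨hb, Finset.mem_univ _⟩, rfl⟩

lemma res_back (P : Finset (Finset (Fin r))) (φ : Fin r → Fin d) :
    (back P φ).image (fun B => B.image resf) = P := by
  rw [back, Finset.image_image]
  have hcongr : ∀ bc ∈ P ×ˢ (Finset.univ : Finset (Fin d)),
      ((fun B => Finset.image resf B) ∘ fun bc => blockOf φ bc.1 bc.2) bc = bc.1 := by
    intro bc _
    show (blockOf φ bc.1 bc.2).image resf = bc.1
    rw [blockOf, Finset.image_image]
    have : ∀ i ∈ bc.1, (resf ∘ fun i => embf d r i (φ i + bc.2)) i = id i := by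
      intro i _
      exact resf_embf _ _
    rw [Finset.image_congr this, Finset.image_id]
  rw [Finset.image_congr hcongr]
  exact image_fst_product P

lemma image_rho_pow_blockOf (φ : Fin r → Fin d) (b : Finset (Fin r)) (c : Fin d)
    (k : ℕ) : (blockOf φ b c).image (fun x => ((ρ) ^ k) x)
      = blockOf φ b (c + (k : Fin d)) := by
  rw [blockOf, blockOf, Finset.image_image]
  apply Finset.image_congr
  intro i _
  show ((ρ) ^ k) (embf d r i (φ i + c)) = embf d r i (φ i + (c + (k : Fin d)))
  rw [rho_pow_embf, add_assoc]

lemma tl {p : Finset (Finset (Fin (d * r)))}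
    (hp3 : ∀ B ∈ p, ∀ B' ∈ p, B ≠ B' → Disjoint B B')
    (hfix : permAct (ρ) p = p) {B B' : Finset (Fin (d * r))}
    (hB : B ∈ p) (hB' : B' ∈ p) {i : Fin r} {c c' : Fin d}
    (h1 : embf d r i c ∈ B) (h2 : embf d r i c' ∈ B') :
    B' = B.image (fun x => ((ρ) ^ ((c' - c).1)) x) := by
  have hmem : B.image (fun x => ((ρ) ^ ((c' - c).1)) x) ∈ p := image_pow_mem hfix _ hB
  have h3 : embf d r i c' ∈ B.image (fun x => ((ρ) ^ ((c' - c).1)) x) := by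
    have h4 : ((ρ) ^ ((c' - c).1)) (embf d r i c) = embf d r i c' := by
      rw [rho_pow_embf, Fin.cast_val_eq_self, add_comm, sub_add_cancel]
    rw [← h4]
    exact Finset.mem_image_of_mem _ h1
  exact blocks_eq_of_mem hp3 hB' hmem h2 h3

lemma res_rho_pow (B : Finset (Fin (d * r))) (k : ℕ) :
    (B.image (fun x => ((ρ) ^ k) x)).image resf = B.image resf := by
  rw [Finset.image_image]
  apply Finset.image_congr
  intro x _
  obtain ⟨j, c, rfl⟩ := embf_surj x
  show resf (((ρ) ^ k) (embf d r j c)) = resf (embf d r j c)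
  rw [rho_pow_embf, resf_embf, resf_embf]

lemma back_inj {P P' : Finset (Finset (Fin r))} {φ φ' : Fin r → Fin d}
    (hP1 : ∀ b ∈ P, b.Nonempty) (hP2 : ∀ i : Fin r, ∃ b ∈ P, i ∈ b)
    (hP3 : ∀ b ∈ P, ∀ b' ∈ P, b ≠ b' → Disjoint b b')
    (hφ : ∀ i : Fin r, (∀ b ∈ P, i ∈ b → ∀ j ∈ b, i ≤ j) → φ i = 0)
    (hφ' : ∀ i : Fin r, (∀ b ∈ P', i ∈ b → ∀ j ∈ b, i ≤ j) → φ' i = 0)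
    (h : back P φ = back P' φ') : P = P' ∧ φ = φ' := by
  have hPP : P = P' := by rw [← res_back P φ, h, res_back]
  refine ⟨hPP, funext fun i => ?_⟩
  obtain ⟨b, hb, hib⟩ := hP2 i
  have hbne : b.Nonempty := hP1 b hb
  have hi₀b : b.min' hbne ∈ b := Finset.min'_mem _ _
  have hmin : ∀ b' ∈ P, b.min' hbne ∈ b' → ∀ j ∈ b', b.min' hbne ≤ j := by
    intro b' hb' hi₀' j hj
    have hbb : b' = b := blocks_eq_of_mem hP3 hb' hb hi₀' hi₀b
    subst hbb
    exact Finset.min'_le _ _ hj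
  have h0 : φ (b.min' hbne) = 0 := hφ _ hmin
  have h0' : φ' (b.min' hbne) = 0 := hφ' _ (hPP ▸ hmin)
  have hX : blockOf φ b 0 ∈ back P φ := mem_back.2 ⟨b, hb, 0, rfl⟩
  have hX' : blockOf φ' b 0 ∈ back P φ := by
    rw [h]; exact mem_back.2 ⟨b, hPP ▸ hb, 0, rfl⟩
  have hpart := back_isPartition hP1 hP2 hP3 (φ := φ)
  have hm : embf d r (b.min' hbne) 0 ∈ blockOf φ b 0 :=
    mem_blockOf.2 ⟨hi₀b, by rw [h0, add_zero]⟩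
  have hm' : embf d r (b.min' hbne) 0 ∈ blockOf φ' b 0 :=
    mem_blockOf.2 ⟨hi₀b, by rw [h0', add_zero]⟩
  have hXX : blockOf φ b 0 = blockOf φ' b 0 :=
    blocks_eq_of_mem hpart.2.2 hX hX' hm hm'
  have hmi : embf d r i (φ i + 0) ∈ blockOf φ' b 0 := by
    rw [← hXX]; exact mem_blockOf.2 ⟨hib, rfl⟩
  have := (mem_blockOf.1 hmi).2
  rwa [add_zero, add_zero] at this

lemma back_surj (hr0 : 0 < r) {p : Finset (Finset (Fin (d * r)))}
    (hp1 : ∀ B ∈ p, B.Nonempty) (hp2 : ∀ x : Fin (d * r), ∃ B ∈ p, x ∈ B)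
    (hp3 : ∀ B ∈ p, ∀ B' ∈ p, B ≠ B' → Disjoint B B')
    (hfix : permAct (ρ) p = p)
    (htr : ∀ B ∈ p, ∀ (i : Fin r) (c c' : Fin d),
      embf d r i c ∈ B → embf d r i c' ∈ B → c = c') :
    ∃ P φ, (∀ b ∈ P, b.Nonempty) ∧ (∀ i : Fin r, ∃ b ∈ P, i ∈ b)
      ∧ (∀ b ∈ P, ∀ b' ∈ P, b ≠ b' → Disjoint b b')
      ∧ (∀ i : Fin r, (∀ b ∈ P, i ∈ b → ∀ j ∈ b, i ≤ j) → φ i = 0)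
      ∧ back P φ = p := by
  classical
  set P := p.image (fun B => B.image resf) with hP
  have res_eq : ∀ B ∈ p, ∀ B' ∈ p, ∀ (i : Fin r) (c c' : Fin d),
      embf d r i c ∈ B → embf d r i c' ∈ B' → B'.image resf = B.image resf := by
    intro B hB B' hB' i c c' h1 h2
    rw [tl hp3 hfix hB hB' h1 h2, res_rho_pow]
  have hQ1 : ∀ b ∈ P, b.Nonempty := by
    intro b hb
    obtain ⟨B, hB, rfl⟩ := Finset.mem_image.1 hb
    exact (hp1 B hB).image _
  have hQ2 : ∀ i : Fin r, ∃ b ∈ P, i ∈ b := by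
    intro i
    obtain ⟨B, hB, hi⟩ := hp2 (embf d r i 0)
    exact ⟨B.image resf, Finset.mem_image_of_mem _ hB, mem_res.2 ⟨0, hi⟩⟩
  have hQ3 : ∀ b ∈ P, ∀ b' ∈ P, b ≠ b' → Disjoint b b' := by
    intro b hb b' hb' hne
    obtain ⟨B, hB, rfl⟩ := Finset.mem_image.1 hb
    obtain ⟨B', hB', rfl⟩ := Finset.mem_image.1 hb'
    rw [Finset.disjoint_left]
    intro i hi hi'
    obtain ⟨c, hc⟩ := mem_res.1 hi
    obtain ⟨c', hc'⟩ := mem_res.1 hi'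
    exact hne (res_eq B hB B' hB' i c c' hc hc').symm
  choose Bm hBm1 hBm2 using fun j : Fin r => hp2 (embf d r j 0)
  choose bOf hbOf1 hbOf2 using hQ2
  have hbne : ∀ i, (bOf i).Nonempty := fun i => ⟨i, hbOf2 i⟩
  set mn : Fin r → Fin r := fun i => (bOf i).min' (hbne i) with hmn
  have res_Bm : ∀ i : Fin r, (Bm (mn i)).image resf = bOf i := by
    intro i
    obtain ⟨B, hB, hres⟩ := Finset.mem_image.1 (hbOf1 i)
    have hmem : mn i ∈ B.image resf := by rw [hres]; exact Finset.min'_mem _ _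
    obtain ⟨c₀, hc₀⟩ := mem_res.1 hmem
    rw [← hres]
    exact res_eq B hB (Bm (mn i)) (hBm1 (mn i)) (mn i) c₀ 0 hc₀ (hBm2 (mn i))
  have existsc : ∀ i : Fin r, ∃ c, embf d r i c ∈ Bm (mn i) := by
    intro i
    have : i ∈ (Bm (mn i)).image resf := by rw [res_Bm]; exact hbOf2 i
    exact mem_res.1 this
  choose φ hφ using existsc
  have c1 : ∀ (i : Fin r) (b : Finset (Fin r)), b ∈ P → i ∈ b → bOf i = b :=
    fun i b hb hib => blocks_eq_of_mem hQ3 (hbOf1 i) hb (hbOf2 i) hib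
  have hmn0 : ∀ (b : Finset (Fin r)), b ∈ P → ∀ (hne : b.Nonempty),
      ∀ i ∈ b, mn i = b.min' hne := by
    intro b hb hne i hi
    have h1 : mn i ∈ b := by rw [← c1 i b hb hi]; exact Finset.min'_mem _ _
    have h2 : b.min' hne ∈ bOf i := by rw [c1 i b hb hi]; exact Finset.min'_mem _ _
    exact le_antisymm (Finset.min'_le _ _ h2) (Finset.min'_le _ _ h1)
  have c3 : ∀ (b : Finset (Fin r)) (hb : b ∈ P) (hne : b.Nonempty),
      blockOf φ b 0 = Bm (b.min' hne) := by
    intro b hb hne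
    apply Finset.Subset.antisymm
    · intro x hx
      rw [blockOf, Finset.mem_image] at hx
      obtain ⟨j, hj, rfl⟩ := hx
      have h1 := hφ j
      rw [hmn0 b hb hne j hj] at h1
      rw [add_zero]
      exact h1
    · intro x hx
      obtain ⟨j, k, rfl⟩ := embf_surj x
      have hi₀b : b.min' hne ∈ b := Finset.min'_mem _ _
      have hres : (Bm (b.min' hne)).image resf = b := by
        have := res_Bm (b.min' hne)
        rwa [hmn0 b hb hne _ hi₀b, c1 _ b hb hi₀b] at this
      have hjb : j ∈ b := by
        rw [← hres]; exact mem_res.2 ⟨k, hx⟩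
      have hφj : embf d r j (φ j) ∈ Bm (b.min' hne) := by
        have := hφ j
        rwa [hmn0 b hb hne j hjb] at this
      have hk : k = φ j := htr _ (hBm1 _) j k (φ j) hx hφj
      exact mem_blockOf.2 ⟨hjb, by rw [hk, add_zero]⟩
  have c4 : ∀ i : Fin r, (∀ b ∈ P, i ∈ b → ∀ j ∈ b, i ≤ j) → φ i = 0 := by
    intro i hi
    have hle : ∀ j ∈ bOf i, i ≤ j := hi _ (hbOf1 i) (hbOf2 i)
    have hmni : mn i = i :=
      le_antisymm (Finset.min'_le _ _ (hbOf2 i)) (hle _ (Finset.min'_mem _ _))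
    have h1 := hφ i
    rw [hmni] at h1
    exact htr (Bm i) (hBm1 i) i (φ i) 0 h1 (hBm2 i)
  have hback : back P φ = p := by
    apply Finset.Subset.antisymm
    · intro X hX
      obtain ⟨b, hb, c, rfl⟩ := mem_back.1 hX
      have hne : b.Nonempty := hQ1 b hb
      have h0 : blockOf φ b 0 ∈ p := by rw [c3 b hb hne]; exact hBm1 _
      have himg := image_pow_mem hfix c.1 h0
      rwa [image_rho_pow_blockOf, zero_add, Fin.cast_val_eq_self] at himg
    · intro B hB
      have hbP : B.image resf ∈ P := Finset.mem_image_of_mem _ hB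
      have hne : (B.image resf).Nonempty := hQ1 _ hbP
      have hi₀m : (B.image resf).min' hne ∈ B.image resf := Finset.min'_mem _ _
      obtain ⟨c₀, hc₀⟩ := mem_res.1 hi₀m
      have h0 : blockOf φ (B.image resf) 0 = Bm ((B.image resf).min' hne) :=
        c3 _ hbP hne
      have htl := tl hp3 hfix (hBm1 ((B.image resf).min' hne)) hB
        (hBm2 ((B.image resf).min' hne)) hc₀
      rw [htl, ← h0, image_rho_pow_blockOf, zero_add, sub_zero, Fin.cast_val_eq_self]
      exact mem_back.2 ⟨_, hbP, c₀, rfl⟩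
  exact ⟨P, φ, hQ1, fun i => ⟨bOf i, hbOf1 i, hbOf2 i⟩, hQ3, c4, hback⟩

def minset (P : Finset (Finset (Fin r))) (hP1 : ∀ b ∈ P, b.Nonempty) : Finset (Fin r) :=
  P.attach.image (fun b => b.1.min' (hP1 b.1 b.2))

lemma mem_minset {P : Finset (Finset (Fin r))} (hP1 : ∀ b ∈ P, b.Nonempty)
    (hP2 : ∀ i : Fin r, ∃ b ∈ P, i ∈ b)
    (hP3 : ∀ b ∈ P, ∀ b' ∈ P, b ≠ b' → Disjoint b b') (i : Fin r) :
    i ∈ minset P hP1 ↔ ∀ b ∈ P, i ∈ b → ∀ j ∈ b, i ≤ j := by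
  rw [minset, Finset.mem_image]
  constructor
  · rintro ⟨⟨b, hb⟩, -, rfl⟩
    intro b' hb' hib' j hj
    have : b' = b := blocks_eq_of_mem hP3 hb' hb hib' (Finset.min'_mem _ _)
    subst this
    exact Finset.min'_le _ _ hj
  · intro h
    obtain ⟨b, hb, hib⟩ := hP2 i
    refine ⟨⟨b, hb⟩, Finset.mem_attach _ _, ?_⟩
    exact le_antisymm (Finset.min'_le _ _ hib) (h b hb hib _ (Finset.min'_mem _ _))

lemma card_minset {P : Finset (Finset (Fin r))} (hP1 : ∀ b ∈ P, b.Nonempty)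
    (hP3 : ∀ b ∈ P, ∀ b' ∈ P, b ≠ b' → Disjoint b b') :
    (minset P hP1).card = P.card := by
  rw [minset, Finset.card_image_of_injOn, Finset.card_attach]
  rintro ⟨b, hb⟩ - ⟨b', hb'⟩ - h
  simp only at h
  have h1 : b.min' (hP1 b hb) ∈ b' := by rw [h]; exact Finset.min'_mem _ _
  exact Subtype.ext (blocks_eq_of_mem hP3 hb hb' (Finset.min'_mem _ _) h1)

lemma card_vanishing (S : Finset (Fin r)) :
    Nat.card {φ : Fin r → Fin d // ∀ i ∈ S, φ i = 0} = d ^ (r - S.card) := by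
  classical
  have e : {φ : Fin r → Fin d // ∀ i ∈ S, φ i = 0} ≃ ({i : Fin r // i ∉ S} → Fin d) :=
    { toFun := fun φ j => φ.1 j.1
      invFun := fun g =>
        ⟨fun i => if h : i ∈ S then 0 else g ⟨i, h⟩, fun i hi => dif_pos hi⟩
      left_inv := by
        rintro ⟨φ, hφ⟩
        apply Subtype.ext
        funext i
        by_cases h : i ∈ S
        · simp [h, (hφ i h).symm]
        · simp [h]
      right_inv := by
        intro g
        funext j
        simp [j.2] }
  rw [Nat.card_congr e, Nat.card_eq_fintype_card, Fintype.card_fun,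
    Fintype.card_fin, Fintype.card_subtype_compl, Fintype.card_fin,
    Fintype.card_coe]
end WithNeZero
end TFP


open TFP

/-- With `m = d·r`, `σ` the `m`-cycle and `q` the orbit partition of `⟨σ^r⟩`, the
number of partitions `p` of `{1,…,m}` into `d·r'` blocks which are fixed by `σ^r`
and transverse to `q` (each block of `p` meets each block of `q` in at most one
point) equals `S(r,r')·d^(r-r')`. -/
theorem transverse_fixed_partition_count (d r r' : ℕ)
    (hd : 1 ≤ d) (hr : 1 ≤ r) (hr'1 : 1 ≤ r') (hr'r : r' ≤ r) :
    Nat.card {p : Finset (Finset (Fin (d * r))) //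
      IsPartition p ∧ p.card = d * r' ∧
      permAct ((finRotate (d * r)) ^ r) p = p ∧
      ∀ B ∈ p, ∀ C ∈ orbitPartition ((finRotate (d * r)) ^ r), (B ∩ C).card ≤ 1}
    = stirling2 r r' * d ^ (r - r') := by
  classical
  haveI : NeZero d := ⟨by omega⟩
  have hr0 : 0 < r := hr
  have hd0 : 0 < d := hd
  let T := Σ P : {P : Finset (Finset (Fin r)) // IsPartitionInto r r' P},
    {φ : Fin r → Fin d // ∀ i : Fin r, (∀ b ∈ P.1, i ∈ b → ∀ j ∈ b, i ≤ j) → φ i = 0}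
  have hF : ∀ x : T, IsPartition (back x.1.1 x.2.1) ∧ (back x.1.1 x.2.1).card = d * r' ∧
      permAct ((finRotate (d * r)) ^ r) (back x.1.1 x.2.1) = back x.1.1 x.2.1 ∧
      ∀ B ∈ back x.1.1 x.2.1, ∀ C ∈ orbitPartition ((finRotate (d * r)) ^ r),
        (B ∩ C).card ≤ 1 := by
    intro x
    obtain ⟨hP1, hP2, hP3, hPc⟩ := x.1.2
    refine ⟨back_isPartition hP1 hP2 hP3, ?_, back_fixed, ?_⟩
    · rw [back_card hP1 hP3, hPc, Nat.mul_comm]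
    · exact (transverse_iff hr0 _).2 (back_transverse)
  let F : T → {p : Finset (Finset (Fin (d * r))) //
      IsPartition p ∧ p.card = d * r' ∧
      permAct ((finRotate (d * r)) ^ r) p = p ∧
      ∀ B ∈ p, ∀ C ∈ orbitPartition ((finRotate (d * r)) ^ r), (B ∩ C).card ≤ 1} :=
    fun x => ⟨back x.1.1 x.2.1, hF x⟩
  have hbij : Function.Bijective F := by
    constructor
    · rintro ⟨⟨P, hP⟩, ⟨φ, hφ⟩⟩ ⟨⟨P', hP'⟩, ⟨φ', hφ'⟩⟩ h
      have hb : back P φ = back P' φ' := congrArg Subtype.val h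
      obtain ⟨h1, h2⟩ := back_inj hP.1 hP.2.1 hP.2.2.1 hφ hφ' hb
      subst h1
      subst h2
      rfl
    · rintro ⟨p, hp1, hp2, hp3, hp4⟩
      have htr := (transverse_iff hr0 p).1 hp4
      obtain ⟨P, φ, hQ1, hQ2, hQ3, hnorm, hback⟩ :=
        back_surj hr0 hp1.1 hp1.2.1 hp1.2.2 hp3 htr
      have hcard : P.card = r' := by
        have h1 : (back P φ).card = P.card * d := back_card hQ1 hQ3
        rw [hback, hp2] at h1
        rw [Nat.mul_comm d r'] at h1
        exact (Nat.eq_of_mul_eq_mul_right hd0 h1).symm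
      refine ⟨⟨⟨P, hQ1, hQ2, hQ3, hcard⟩, ⟨φ, hnorm⟩⟩, Subtype.ext hback⟩
  rw [← Nat.card_eq_of_bijective F hbij]
  haveI : ∀ P : {P : Finset (Finset (Fin r)) // IsPartitionInto r r' P},
      Fintype {φ : Fin r → Fin d //
        ∀ i : Fin r, (∀ b ∈ P.1, i ∈ b → ∀ j ∈ b, i ≤ j) → φ i = 0} :=
    fun P => Fintype.ofFinite _
  have hfib : ∀ P : {P : Finset (Finset (Fin r)) // IsPartitionInto r r' P},
      Nat.card {φ : Fin r → Fin d //
        ∀ i : Fin r, (∀ b ∈ P.1, i ∈ b → ∀ j ∈ b, i ≤ j) → φ i = 0} = d ^ (r - r') := by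
    intro P
    obtain ⟨hP1, hP2, hP3, hPc⟩ := P.2
    have e : {φ : Fin r → Fin d //
        ∀ i : Fin r, (∀ b ∈ P.1, i ∈ b → ∀ j ∈ b, i ≤ j) → φ i = 0}
        ≃ {φ : Fin r → Fin d // ∀ i ∈ minset P.1 hP1, φ i = 0} :=
      Equiv.subtypeEquivRight (by
        intro φ
        constructor
        · intro h i hi
          exact h i ((mem_minset hP1 hP2 hP3 i).1 hi)
        · intro h i hi
          exact h i ((mem_minset hP1 hP2 hP3 i).2 hi))
    rw [Nat.card_congr e, card_vanishing, card_minset hP1 hP3, hPc]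
  have e1 : T ≃ {P : Finset (Finset (Fin r)) // IsPartitionInto r r' P}
      × Fin (d ^ (r - r')) :=
    (Equiv.sigmaCongrRight fun P => Fintype.equivFinOfCardEq
      (by rw [← Nat.card_eq_fintype_card]; exact hfib P)).trans
      (Equiv.sigmaEquivProd _ _)
  rw [Nat.card_congr e1, Nat.card_prod, Nat.card_eq_fintype_card (α := Fin _),
    Fintype.card_fin, stirling2]
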